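/- Let ρ₂, κ₂, κ₁ > 0 and h ∈ C¹([−1,1];ℝ) with h(−1)=h(1)=0. For φ ∈ H²(−1,1) ∩ H¹₀(−1,1) and g ∈ L²(−1,1) (both complex-valued) and ω ∈ ℝ satisfying −ρ₂ω²φ − κ₂φ'' + g = 0 in L²(−1,1), one has ∫_{−1}^{1} h'·(ρ₂|ωφ|² + κ₂|φ'|²) dx = −2Re ∫_{−1}^{1} g·h·(φ̄') dx. -/

import Mathlib

open Real Set MeasureTheory intervalIntegral

lemma normSq_deriv {f : ℝ → ℂ} {f' : ℂ} {x : ℝ} (hf : HasDerivAt f f' x) :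
    HasDerivAt (fun y => ‖f y‖ ^ 2) (2 * (star (f x) * f').re) x := by
  have hre : HasDerivAt (fun y => (f y).re) f'.re x :=
    Complex.reCLM.hasFDerivAt.comp_hasDerivAt x hf
  have him : HasDerivAt (fun y => (f y).im) f'.im x :=
    Complex.imCLM.hasFDerivAt.comp_hasDerivAt x hf
  have H := (hre.mul hre).add (him.mul him)
  have e1 : (fun y => ‖f y‖ ^ 2) = fun y => (f y).re * (f y).re + (f y).im * (f y).im := by
    funext y
    rw [← Complex.normSq_eq_norm_sq]
    simp [Complex.normSq_apply]
  rw [e1]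
  refine H.congr_deriv ?_
  simp [Complex.mul_re]
  ring

theorem stmt15 (ρ₂ κ₂ κ₁ : ℝ) (hρ₂ : 0 < ρ₂) (hκ₂ : 0 < κ₂) (hκ₁ : 0 < κ₁) (ω : ℝ)
    (φ φ' φ'' g : ℝ → ℂ) (h h' : ℝ → ℝ)
    (hφ : ∀ x ∈ Icc (-1:ℝ) 1, HasDerivAt φ (φ' x) x)
    (hφ' : ∀ x ∈ Icc (-1:ℝ) 1, HasDerivAt φ' (φ'' x) x)
    (hφ''int : IntervalIntegrable φ'' volume (-1) 1)
    (hφcont : ContinuousOn φ' (Icc (-1:ℝ) 1))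
    (hgint : IntervalIntegrable g volume (-1) 1)
    (hh : ∀ x ∈ Icc (-1:ℝ) 1, HasDerivAt h (h' x) x)
    (hhcont : ContinuousOn h' (Icc (-1:ℝ) 1))
    (hbc0 : φ (-1) = 0) (hbc1 : φ 1 = 0)
    (hhb0 : h (-1) = 0) (hhb1 : h 1 = 0)
    (heq : ∀ x ∈ Icc (-1:ℝ) 1,
      -(ρ₂:ℂ) * (ω:ℂ) ^ 2 * φ x - (κ₂:ℂ) * φ'' x + g x = 0) :
    ∫ x in (-1:ℝ)..1, h' x * (ρ₂ * ‖(ω:ℂ) * φ x‖ ^ 2 + κ₂ * ‖φ' x‖ ^ 2)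
      = -2 * (∫ x in (-1:ℝ)..1, g x * (h x : ℂ) * star (φ' x)).re := by
  have huIcc : uIcc (-1:ℝ) 1 = Icc (-1:ℝ) 1 := uIcc_of_le (by norm_num)
  set A : ℝ → ℝ := fun x => ρ₂ * ‖(ω:ℂ) * φ x‖ ^ 2 + κ₂ * ‖φ' x‖ ^ 2 with hA
  set B : ℝ → ℝ := fun x => 2 * h x * (g x * star (φ' x)).re with hB
  -- continuity facts
  have hφc : ContinuousOn φ (Icc (-1:ℝ) 1) :=
    fun x hx => ((hφ x hx).continuousAt).continuousWithinAt
  have hhc : ContinuousOn h (Icc (-1:ℝ) 1) :=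
    fun x hx => ((hh x hx).continuousAt).continuousWithinAt
  have hAc : ContinuousOn A (Icc (-1:ℝ) 1) := by
    apply ContinuousOn.add
    · exact continuousOn_const.mul (((continuousOn_const.mul hφc).norm).pow 2)
    · exact continuousOn_const.mul ((hφcont.norm).pow 2)
  -- the derivative of F := h * A
  have hF : ∀ x ∈ Icc (-1:ℝ) 1,
      HasDerivAt (fun y => h y * A y) (h' x * A x + B x) x := by
    intro x hx
    have h1 : HasDerivAt (fun y => ‖(ω:ℂ) * φ y‖ ^ 2)
        (2 * (star ((ω:ℂ) * φ x) * ((ω:ℂ) * φ' x)).re) x :=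
      normSq_deriv ((hφ x hx).const_mul ((ω:ℂ)))
    have h2 : HasDerivAt (fun y => ‖φ' y‖ ^ 2)
        (2 * (star (φ' x) * φ'' x).re) x := normSq_deriv (hφ' x hx)
    have hAd := (h1.const_mul ρ₂).add (h2.const_mul κ₂)
    have H := (hh x hx).mul hAd
    refine H.congr_deriv ?_
    have hgx : g x = (ρ₂:ℂ) * (ω:ℂ) ^ 2 * φ x + (κ₂:ℂ) * φ'' x := by
      have := heq x hx; linear_combination this
    have key : B x = h x * (ρ₂ * (2 * (star ((ω:ℂ) * φ x) * ((ω:ℂ) * φ' x)).re)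
        + κ₂ * (2 * (star (φ' x) * φ'' x).re)) := by
      rw [hB]
      simp only [hgx]
      simp [Complex.mul_re, Complex.mul_im, Complex.add_re, Complex.add_im,
        Complex.conj_re, Complex.conj_im, Complex.ofReal_re, Complex.ofReal_im, pow_two]
      ring
    rw [key]
    rfl
  -- FTC
  have hBint : IntervalIntegrable B volume (-1) 1 := by
    have hc : ContinuousOn (fun x => (2 * h x : ℂ) * star (φ' x)) (uIcc (-1:ℝ) 1) := by
      rw [huIcc]
      exact ((continuousOn_const.mul (Complex.continuous_ofReal.comp_continuousOn hhc))).mul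
        (hφcont.star)
    have : IntervalIntegrable (fun x => g x * ((2 * h x : ℂ) * star (φ' x))) volume (-1) 1 :=
      hgint.mul_continuousOn hc
    have hre : IntervalIntegrable
        (fun x => (g x * ((2 * h x : ℂ) * star (φ' x))).re) volume (-1) 1 :=
      ⟨this.1.re, this.2.re⟩
    apply hre.congr
    · intro x _
      rw [hB]
      simp [Complex.mul_re, Complex.mul_im]
      ring
  have hAint : IntervalIntegrable (fun x => h' x * A x) volume (-1) 1 := by
    apply ContinuousOn.intervalIntegrable
    rw [huIcc]
    exact hhcont.mul hAc
  have hFTC : (∫ x in (-1:ℝ)..1, (h' x * A x + B x)) = h 1 * A 1 - h (-1) * A (-1) := by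
    have := intervalIntegral.integral_eq_sub_of_hasDerivAt
      (f := fun y => h y * A y) (f' := fun x => h' x * A x + B x)
      (fun x hx => hF x (huIcc ▸ hx)) (hAint.add hBint)
    simpa using this
  rw [hhb0, hhb1, zero_mul, zero_mul, sub_zero, intervalIntegral.integral_add hAint hBint] at hFTC
  -- compute the real part of the RHS integral
  have hGint : IntervalIntegrable (fun x => g x * (h x : ℂ) * star (φ' x)) volume (-1) 1 := by
    have hc : ContinuousOn (fun x => (h x : ℂ) * star (φ' x)) (uIcc (-1:ℝ) 1) := by
      rw [huIcc]
      exact (Complex.continuous_ofReal.comp_continuousOn hhc).mul (hφcont.star)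
    have := hgint.mul_continuousOn hc
    apply this.congr
    intro x _
    dsimp only
    ring
  have hre : (∫ x in (-1:ℝ)..1, g x * (h x : ℂ) * star (φ' x)).re
      = ∫ x in (-1:ℝ)..1, (g x * (h x : ℂ) * star (φ' x)).re := by
    exact (Complex.reCLM.intervalIntegral_comp_comm hGint).symm
  have hBre : ∀ x, B x = 2 * (g x * (h x : ℂ) * star (φ' x)).re := by
    intro x
    rw [hB]
    simp [Complex.mul_re, Complex.mul_im]
    ring
  have hBint2 : (∫ x in (-1:ℝ)..1, B x)
      = 2 * ∫ x in (-1:ℝ)..1, (g x * (h x : ℂ) * star (φ' x)).re := by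
    rw [← intervalIntegral.integral_const_mul]
    exact intervalIntegral.integral_congr fun x _ => hBre x
  rw [hre]
  linarith [hFTC, hBint2]
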